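/- Let 𝒫 be the smallest family of subsets of L₂ containing ↑a for every a ∈ T₂ and closed under finite unions and complements. Then 𝒫 is closed under the operation A ↦ ↓A = {b ∈ L₂ : ∃ c ∈ A, b ≤ c}, and (L₂, ≤, 𝒫) is a descriptive S4-frame: 𝒫 separates points (for x ≠ y there is A ∈ 𝒫 with x ∈ A and y ∉ A), every subfamily of 𝒫 with the finite intersection property has nonempty intersection, and whenever a ≰ b there is A ∈ 𝒫 with b ∈ A and a ∉ ↓A. -/

import Mathlib

open Set

/-- Finite and infinite `σ`-valued sequences, encoded as functions `ℕ → Option σ` whose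
domain of definition is an initial segment of `ℕ`. -/
structure Lgen (σ : Type*) where
  toFun : ℕ → Option σ
  init : ∀ n, toFun (n + 1) ≠ none → toFun n ≠ none

/-- The initial-segment (prefix) partial order on `Lgen σ`. -/
instance Lgen.instPartialOrder {σ : Type*} : PartialOrder (Lgen σ) where
  le f g := ∀ (n : ℕ) (s : σ), f.toFun n = some s → g.toFun n = some s
  le_refl f n s h := h
  le_trans f g h hfg hgh n s hs := hgh n s (hfg n s hs)
  le_antisymm f g hfg hgf := by
    obtain ⟨ff, hf⟩ := f
    obtain ⟨gf, hg⟩ := g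
    have hfun : ff = gf := by
      funext n
      cases hfn : ff n with
      | some s =>
        have h2 : gf n = some s := hfg n s hfn
        exact h2.symm
      | none =>
        cases hgn : gf n with
        | some s =>
          have h2 : ff n = some s := hgf n s hgn
          rw [hfn] at h2
          exact absurd h2 (by simp)
        | none => rfl
    subst hfun
    rfl

/-- The finite sequence given by a list, as an element of `Lgen σ`. -/
def Lgen.ofList {σ : Type*} (l : List σ) : Lgen σ where
  toFun n := l[n]?
  init n h := by
    simp only [ne_eq, List.getElem?_eq_none_iff, not_le] at h ⊢
    omega

/-- The infinite binary tree with limits `L₂`: finite and infinite binary sequences with the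
initial-segment order. -/
abbrev L2 : Type := Lgen Bool

/-- The smallest family of subsets of `L₂` containing `↑a` for every finite binary sequence `a`
and closed under finite unions and complements. -/
inductive P2 : Set L2 → Prop
  | basic (a : List Bool) : P2 {b : L2 | Lgen.ofList a ≤ b}
  | union {A B : Set L2} : P2 A → P2 B → P2 (A ∪ B)
  | compl {A : Set L2} : P2 A → P2 Aᶜ

-- ===== auxiliary lemmas =====


lemma Lgen.ext' {σ : Type*} {f g : Lgen σ} (h : ∀ n, f.toFun n = g.toFun n) : f = g := by
  obtain ⟨ff, _⟩ := f; obtain ⟨gf, _⟩ := g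
  have : ff = gf := funext h
  subst this; rfl

lemma Lgen.le_def {σ : Type*} {f g : Lgen σ} :
    f ≤ g ↔ ∀ (n : ℕ) (s : σ), f.toFun n = some s → g.toFun n = some s := Iff.rfl

/-- no gaps: if defined at n, defined at all m ≤ n -/
lemma Lgen.defined_of_le {σ : Type*} (f : Lgen σ) {m n : ℕ} (hmn : m ≤ n)
    (h : f.toFun n ≠ none) : f.toFun m ≠ none := by
  induction n with
  | zero => simpa [Nat.le_zero.mp hmn] using h
  | succ k ih =>
    rcases Nat.lt_or_ge m (k+1) with hm | hm
    · exact ih (Nat.lt_succ_iff.mp hm) (f.init k h)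
    · have : m = k + 1 := le_antisymm hmn hm
      subst this; exact h

lemma Lgen.none_of_le {σ : Type*} (f : Lgen σ) {m n : ℕ} (hmn : m ≤ n)
    (h : f.toFun m = none) : f.toFun n = none := by
  by_contra hn
  exact (Lgen.defined_of_le f hmn hn) h

lemma Lgen.ofList_le_iff {σ : Type*} {l : List σ} {b : Lgen σ} :
    Lgen.ofList l ≤ b ↔ ∀ n < l.length, b.toFun n = l[n]? := by
  constructor
  · intro h n hn
    have : l[n]? = some l[n] := List.getElem?_eq_getElem hn
    rw [this]
    exact h n _ this
  · intro h n s hs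
    have hs' : l[n]? = some s := hs
    have hn : n < l.length := by
      by_contra hn
      rw [List.getElem?_eq_none_iff.mpr (le_of_not_gt hn)] at hs'
      exact Option.noConfusion rfl (heq_of_eq hs')
    show b.toFun n = some s
    rw [h n hn]; exact hs' 

/-- truncation to depth N -/
def trunc (N : ℕ) (b : L2) : L2 where
  toFun n := if n < N then b.toFun n else none
  init n h := by
    simp only [ne_eq, ite_eq_right_iff, not_forall] at h ⊢
    obtain ⟨hn, hb⟩ := h
    exact ⟨by omega, fun hb' => hb (Lgen.none_of_le b (Nat.le_succ n) hb')⟩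

lemma trunc_toFun (N : ℕ) (b : L2) (n : ℕ) :
    (trunc N b).toFun n = if n < N then b.toFun n else none := rfl

lemma trunc_trunc {M N : ℕ} (h : N ≤ M) (b : L2) : trunc N (trunc M b) = trunc N b := by
  apply Lgen.ext'
  intro n
  simp only [trunc_toFun]
  by_cases hn : n < N <;> simp [hn, show n < N → n < M from fun h' => lt_of_lt_of_le h' h]

/-- A set is determined at depth N -/
def Depth (N : ℕ) (A : Set L2) : Prop := ∀ b, b ∈ A ↔ trunc N b ∈ A

lemma Depth.mono {M N : ℕ} (h : N ≤ M) {A : Set L2} (hA : Depth N A) : Depth M A := by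
  intro b
  rw [hA b, hA (trunc M b), trunc_trunc h]

lemma depth_basic (a : List Bool) : Depth a.length {b : L2 | Lgen.ofList a ≤ b} := by
  intro b
  simp only [mem_setOf_eq, Lgen.ofList_le_iff]
  constructor
  · intro h n hn; rw [trunc_toFun, if_pos hn]; exact h n hn
  · intro h n hn; have := h n hn; rwa [trunc_toFun, if_pos hn] at this

lemma depth_union {N : ℕ} {A B : Set L2} (hA : Depth N A) (hB : Depth N B) :
    Depth N (A ∪ B) := fun b => by
  simp only [mem_union, hA b, hB b]

lemma depth_compl {N : ℕ} {A : Set L2} (hA : Depth N A) : Depth N Aᶜ := fun b => by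
  simp only [mem_compl_iff, hA b]

lemma P2.exists_depth {A : Set L2} (hA : P2 A) : ∃ N, Depth N A := by
  induction hA with
  | basic a => exact ⟨a.length, depth_basic a⟩
  | union hA hB ihA ihB =>
    obtain ⟨N, hN⟩ := ihA; obtain ⟨M, hM⟩ := ihB
    exact ⟨max N M, depth_union (hN.mono (le_max_left N M)) (hM.mono (le_max_right N M))⟩
  | compl hA ih => obtain ⟨N, hN⟩ := ih; exact ⟨N, depth_compl hN⟩


/-- the list of the first N values of b -/
def listOf (b : L2) : ℕ → List Bool
  | 0 => []
  | N + 1 =>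
    match b.toFun N with
    | some t => listOf b N ++ [t]
    | none => listOf b N

lemma listOf_getElem? (b : L2) (N : ℕ) : ∀ (n : ℕ),
    (listOf b N)[n]? = if n < N then b.toFun n else none := by
  induction N with
  | zero => intro n; simp [listOf]
  | succ K ih =>
    intro n
    rcases h : b.toFun K with _ | t
    · rw [listOf, h, ih n]
      by_cases hn : n < K
      · simp [hn, show n < K + 1 by omega]
      · by_cases hn' : n < K + 1
        · have hnk : n = K := by omega
          subst hnk
          simp [hn, hn', h]
        · simp [hn, hn']
    · rw [listOf, h]
      have hlen : (listOf b K).length = K := by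
        have h2 : (listOf b K).length ≤ K := by
          rw [← List.getElem?_eq_none_iff, ih K]; simp
        rcases Nat.eq_or_lt_of_le h2 with he | hlt
        · exact he
        · exfalso
          have hnone : (listOf b K)[(listOf b K).length]? = none :=
            List.getElem?_eq_none_iff.mpr le_rfl
          rw [ih _, if_pos hlt] at hnone
          exact Lgen.defined_of_le b (m := (listOf b K).length) (n := K) hlt.le
            (by rw [h]; simp) hnone
      rw [List.getElem?_append, hlen]
      by_cases hn : n < K
      · rw [if_pos hn, ih n, if_pos hn, if_pos (by omega)]
      · rw [if_neg hn]
        by_cases hn' : n < K + 1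
        · have hnk : n = K := by omega
          subst hnk
          simp [h]
        · rw [if_neg hn']
          have : n - K ≥ 1 := by omega
          rcases Nat.exists_eq_add_of_le this with ⟨m, hm⟩
          simp [hm]

lemma listOf_length_le (b : L2) (N : ℕ) : (listOf b N).length ≤ N := by
  rw [← List.getElem?_eq_none_iff, listOf_getElem?]; simp

lemma ofList_listOf (b : L2) (N : ℕ) : Lgen.ofList (listOf b N) = trunc N b := by
  apply Lgen.ext'
  intro n
  show (listOf b N)[n]? = _
  rw [listOf_getElem?, trunc_toFun]

lemma P2.univ : P2 (Set.univ : Set L2) := by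
  have : {b : L2 | Lgen.ofList [] ≤ b} = Set.univ := by
    ext b
    simp [Lgen.ofList_le_iff]
  exact this ▸ P2.basic []

lemma P2.empty : P2 (∅ : Set L2) := by
  have : (Set.univ : Set L2)ᶜ = ∅ := by simp
  exact this ▸ P2.univ.compl

lemma P2.inter {A B : Set L2} (hA : P2 A) (hB : P2 B) : P2 (A ∩ B) := by
  have : A ∩ B = (Aᶜ ∪ Bᶜ)ᶜ := by simp
  exact this ▸ (hA.compl.union hB.compl).compl

lemma P2.singleton_ofList (l : List Bool) : P2 {Lgen.ofList l} := by
  have key : {Lgen.ofList l} = {b : L2 | Lgen.ofList l ≤ b} ∩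
      ({b : L2 | Lgen.ofList (l ++ [true]) ≤ b} ∪ {b : L2 | Lgen.ofList (l ++ [false]) ≤ b})ᶜ := by
    ext c
    simp only [mem_singleton_iff, mem_inter_iff, mem_compl_iff, mem_union, mem_setOf_eq]
    constructor
    · rintro rfl
      refine ⟨le_refl _, ?_⟩
      rintro (h | h) <;>
      · have := (Lgen.ofList_le_iff.mp h) l.length (by simp)
        simp [Lgen.ofList] at this
    · rintro ⟨h1, h2⟩
      have hnone : c.toFun l.length = none := by
        rcases hc : c.toFun l.length with _ | t
        · rfl
        · exfalso
          apply h2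
          have hle : Lgen.ofList (l ++ [t]) ≤ c := by
            rw [Lgen.ofList_le_iff]
            intro n hn
            simp only [List.length_append, List.length_singleton] at hn
            by_cases hn' : n < l.length
            · rw [List.getElem?_append, if_pos hn']
              exact Lgen.ofList_le_iff.mp h1 n hn'
            · have hee : n = l.length := by omega
              subst hee
              rw [List.getElem?_append, if_neg (by omega)]
              simpa using hc
          cases t
          · right; exact hle
          · left; exact hle
      symm
      apply Lgen.ext'
      intro n
      show l[n]? = c.toFun n
      by_cases hn : n < l.length
      · exact (Lgen.ofList_le_iff.mp h1 n hn).symm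
      · rw [List.getElem?_eq_none_iff.mpr (by omega)]
        exact (c.none_of_le (by omega) hnone).symm
  rw [key]
  exact (P2.basic l).inter ((P2.basic _).union (P2.basic _)).compl

/-- the cell of a list at depth N -/
lemma P2.cell (l : List Bool) (N : ℕ) (hl : l.length ≤ N) :
    P2 {b : L2 | trunc N b = Lgen.ofList l} := by
  rcases Nat.eq_or_lt_of_le hl with he | hlt
  · -- length = N : cell is the upset of l
    have : {b : L2 | trunc N b = Lgen.ofList l} = {b : L2 | Lgen.ofList l ≤ b} := by
      ext b
      simp only [mem_setOf_eq]
      constructor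
      · intro h
        rw [Lgen.ofList_le_iff]
        intro n hn
        have := congrArg (fun f => f.toFun n) h
        simp only [trunc_toFun] at this
        rw [if_pos (by omega)] at this
        exact this
      · intro h
        apply Lgen.ext'
        intro n
        rw [trunc_toFun]
        show _ = l[n]?
        by_cases hn : n < N
        · rw [if_pos hn]
          exact Lgen.ofList_le_iff.mp h n (by omega)
        · rw [if_neg hn, List.getElem?_eq_none_iff.mpr (by omega)]
    rw [this]; exact P2.basic l
  · -- length < N : cell is the singleton
    have : {b : L2 | trunc N b = Lgen.ofList l} = {Lgen.ofList l} := by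
      ext b
      simp only [mem_setOf_eq, mem_singleton_iff]
      constructor
      · intro h
        have heq : ∀ n, n < N → b.toFun n = l[n]? := by
          intro n hn
          have := congrArg (fun f => f.toFun n) h
          simp only [trunc_toFun, if_pos hn] at this
          exact this
        have hnone : b.toFun l.length = none := by
          rw [heq l.length hlt, List.getElem?_eq_none_iff.mpr le_rfl]
        apply Lgen.ext'
        intro n
        show b.toFun n = l[n]?
        by_cases hn : n < l.length
        · exact heq n (by omega)
        · rw [List.getElem?_eq_none_iff.mpr (by omega)]
          exact b.none_of_le (by omega) hnone
      · rintro rfl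
        apply Lgen.ext'
        intro n
        rw [trunc_toFun]
        show (if n < N then l[n]? else none) = l[n]?
        by_cases hn : n < N
        · rw [if_pos hn]
        · rw [if_neg hn, List.getElem?_eq_none_iff.mpr (by omega)]
    rw [this]; exact P2.singleton_ofList l

-- ===== chunk 3 =====

lemma P2.listUnion {α : Type*} (L : List α) (f : α → Set L2) (h : ∀ a ∈ L, P2 (f a)) :
    P2 (⋃ a ∈ L, f a) := by
  induction L with
  | nil => simpa using P2.empty
  | cons x xs ih =>
    have : (⋃ a ∈ (x :: xs), f a) = f x ∪ ⋃ a ∈ xs, f a := by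
      simp [Set.iUnion_or, Set.iUnion_union_distrib]
    rw [this]
    exact (h x (by simp)).union (ih fun a ha => h a (List.mem_cons_of_mem x ha))

/-- all binary lists of length ≤ N -/
def allLists : ℕ → List (List Bool)
  | 0 => [[]]
  | N + 1 => [[]] ++ (allLists N).flatMap (fun l => [true :: l, false :: l])

lemma mem_allLists {l : List Bool} {N : ℕ} (h : l.length ≤ N) : l ∈ allLists N := by
  induction N generalizing l with
  | zero =>
    have : l = [] := List.eq_nil_of_length_eq_zero (Nat.le_zero.mp h)
    simp [this, allLists]
  | succ K ih =>
    cases l with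
    | nil => simp [allLists]
    | cons t l' =>
      have : l' ∈ allLists K := ih (by simpa using Nat.lt_succ_iff.mp h)
      simp only [allLists, List.cons_append, List.nil_append, List.mem_cons,
        List.mem_flatMap]
      right
      refine ⟨l', this, ?_⟩
      cases t <;> simp

lemma P2.of_depth {A : Set L2} {N : ℕ} (hA : Depth N A) : P2 A := by
  classical
  have key : A = ⋃ l ∈ allLists N,
      (if Lgen.ofList l ∈ A ∧ l.length ≤ N then {b : L2 | trunc N b = Lgen.ofList l} else ∅) := by
    ext b
    simp only [Set.mem_iUnion]
    constructor
    · intro hb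
      refine ⟨listOf b N, mem_allLists (listOf_length_le b N), ?_⟩
      rw [if_pos ⟨by rw [ofList_listOf]; exact (hA b).mp hb, listOf_length_le b N⟩]
      simp [ofList_listOf]
    · rintro ⟨l, _, hb⟩
      split_ifs at hb with hcond
      · simp only [Set.mem_setOf_eq] at hb
        rw [hA b, hb]
        exact hcond.1
      · exact absurd hb (Set.notMem_empty b)
  rw [key]
  apply P2.listUnion
  intro l _
  split_ifs with hcond
  · exact P2.cell l N hcond.2
  · exact P2.empty

/-- the down-closure preserves depth -/
lemma depth_down {N : ℕ} {A : Set L2} (hA : Depth N A) :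
    Depth N {b : L2 | ∃ c ∈ A, b ≤ c} := by
  -- key: if trunc N b' = trunc N b and b ∈ ↓A then b' ∈ ↓A
  have key : ∀ b b' : L2, trunc N b' = trunc N b → b ∈ {b : L2 | ∃ c ∈ A, b ≤ c} →
      b' ∈ {b : L2 | ∃ c ∈ A, b ≤ c} := by
    intro b b' htr ⟨c, hc, hbc⟩
    have heq : ∀ n < N, b'.toFun n = b.toFun n := by
      intro n hn
      have := congrArg (fun f => f.toFun n) htr
      simpa only [trunc_toFun, if_pos hn] using this
    by_cases hshort : ∃ n < N, b.toFun n = none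
    · -- b is short: b' = b
      obtain ⟨n, hn, hbn⟩ := hshort
      have hb'b : b' = b := by
        apply Lgen.ext'
        intro m
        by_cases hm : m < N
        · exact heq m hm
        · rw [b.none_of_le (le_trans hn.le (le_of_not_gt hm)) hbn,
            b'.none_of_le (le_trans hn.le (le_of_not_gt hm)) (heq n hn ▸ hbn)]
      exact ⟨c, hc, hb'b ▸ hbc⟩
    · -- b is long: trunc N b = trunc N c, so b' ∈ A
      push_neg at hshort
      have htrc : trunc N c = trunc N b := by
        apply Lgen.ext'
        intro m
        rw [trunc_toFun, trunc_toFun]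
        by_cases hm : m < N
        · rw [if_pos hm, if_pos hm]
          rcases hb : b.toFun m with _ | s
          · exact absurd hb (hshort m hm)
          · exact hbc m s hb
        · rw [if_neg hm, if_neg hm]
      have : b' ∈ A := by
        rw [hA b', htr, ← htrc, ← hA c]
        exact hc
      exact ⟨b', this, le_refl b'⟩
  intro b
  constructor
  · intro hb
    exact key b (trunc N b) (trunc_trunc le_rfl b) hb
  · intro hb
    exact key (trunc N b) b (trunc_trunc le_rfl b).symm hb

-- ===== chunk 4 : topology and compactness =====

instance : TopologicalSpace (Option Bool) := ⊥
instance : DiscreteTopology (Option Bool) := ⟨rfl⟩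

instance : TopologicalSpace L2 := TopologicalSpace.induced Lgen.toFun inferInstance

open Topology in
lemma L2.inducing : IsInducing (Lgen.toFun : L2 → ℕ → Option Bool) := ⟨rfl⟩

lemma L2.injective : Function.Injective (Lgen.toFun : L2 → ℕ → Option Bool) := by
  intro f g h
  exact Lgen.ext' (fun n => congrFun h n)

lemma L2.closed_range : IsClosed (Set.range (Lgen.toFun : L2 → ℕ → Option Bool)) := by
  have : Set.range (Lgen.toFun : L2 → ℕ → Option Bool) =
      ⋂ n, {f : ℕ → Option Bool | f (n + 1) = none} ∪ {f | f n ≠ none} := by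
    ext f
    simp only [Set.mem_range, Set.mem_iInter, Set.mem_union, Set.mem_setOf_eq]
    constructor
    · rintro ⟨g, rfl⟩ n
      by_cases h : g.toFun (n + 1) = none
      · exact Or.inl h
      · exact Or.inr (g.init n h)
    · intro h
      refine ⟨⟨f, fun n hn => ?_⟩, rfl⟩
      rcases h n with h' | h'
      · exact absurd h' hn
      · exact h'
  rw [this]
  apply isClosed_iInter
  intro n
  apply IsClosed.union
  · have h1 : {f : ℕ → Option Bool | f (n + 1) = none} =
        (fun f : ℕ → Option Bool => f (n + 1)) ⁻¹' {none} := rfl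
    rw [h1]
    exact (isClosed_discrete ({none} : Set (Option Bool))).preimage (continuous_apply (n + 1))
  · have h2 : {f : ℕ → Option Bool | f n ≠ none} =
        (fun f : ℕ → Option Bool => f n) ⁻¹' ({none}ᶜ) := rfl
    rw [h2]
    exact (isClosed_discrete (({none} : Set (Option Bool))ᶜ)).preimage (continuous_apply n)

open Topology in
instance : CompactSpace L2 := by
  have hce : IsClosedEmbedding (Lgen.toFun : L2 → ℕ → Option Bool) :=
    ⟨⟨L2.inducing, L2.injective⟩, L2.closed_range⟩
  exact hce.compactSpace

lemma continuous_eval (n : ℕ) : Continuous (fun b : L2 => b.toFun n) :=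
  (continuous_apply n).comp L2.inducing.continuous

lemma isClopen_eval (n : ℕ) (o : Option Bool) : IsClopen {b : L2 | b.toFun n = o} := by
  have : {b : L2 | b.toFun n = o} = (fun b : L2 => b.toFun n) ⁻¹' {o} := rfl
  rw [this]
  exact (isClopen_discrete {o}).preimage (continuous_eval n)

lemma P2.isClopen {A : Set L2} (hA : P2 A) : IsClopen A := by
  induction hA with
  | basic a =>
    have : {b : L2 | Lgen.ofList a ≤ b} = ⋂ n ∈ Finset.range a.length, {b : L2 | b.toFun n = a[n]?} := by
      ext b
      simp only [Set.mem_setOf_eq, Set.mem_iInter, Finset.mem_range, Lgen.ofList_le_iff]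
    rw [this]
    exact isClopen_biInter_finset (fun n _ => isClopen_eval n a[n]?)
  | union _ _ ihA ihB => exact ihA.union ihB
  | compl _ ih => exact ih.compl

lemma P2.compactness (F : Set (Set L2)) (hF : ∀ A ∈ F, P2 A)
    (hfip : ∀ G ⊆ F, G.Finite → (⋂₀ G).Nonempty) : (⋂₀ F).Nonempty := by
  by_contra hempty
  rw [Set.not_nonempty_iff_eq_empty] at hempty
  have hclosed : ∀ A : F, IsClosed (A : Set L2) := fun A => (hF A A.2).isClopen.isClosed
  have hint : (Set.univ : Set L2) ∩ ⋂ A : F, (A : Set L2) = ∅ := by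
    rw [Set.univ_inter, ← hempty, Set.sInter_eq_iInter]
  obtain ⟨u, hu⟩ := isCompact_univ.elim_finite_subfamily_closed (fun A : F => (A : Set L2))
    hclosed hint
  have hG := hfip ((fun A : F => (A : Set L2)) '' u) (by rintro _ ⟨A, _, rfl⟩; exact A.2)
    (u.finite_toSet.image _)
  rw [Set.univ_inter] at hu
  obtain ⟨x, hx⟩ := hG
  rw [Set.mem_sInter] at hx
  have : x ∈ ⋂ A ∈ u, (A : Set L2) := by
    simp only [Set.mem_iInter]
    intro A hA
    exact hx _ ⟨A, hA, rfl⟩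
  rw [hu] at this
  exact this

-- ===== final pieces =====

lemma P2.eval_set (n : ℕ) (o : Option Bool) : P2 {c : L2 | c.toFun n = o} := by
  apply P2.of_depth (N := n + 1)
  intro b
  simp only [Set.mem_setOf_eq, trunc_toFun, if_pos (Nat.lt_succ_self n)]

/-- The family `𝒫` generated by the sets `↑a` (for `a ∈ T₂`) under finite
unions and complements is closed under `A ↦ ↓A`, and `(L₂, ≤, 𝒫)` is a descriptive S4-frame:
`𝒫` separates points, every subfamily of `𝒫` with the finite intersection property has a
nonempty intersection, and whenever `a ≰ b` there is `A ∈ 𝒫` with `b ∈ A` and `a ∉ ↓A`. -/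
theorem statement8 :
    (∀ A : Set L2, P2 A → P2 {b : L2 | ∃ c ∈ A, b ≤ c}) ∧
    (∀ x y : L2, x ≠ y → ∃ A : Set L2, P2 A ∧ x ∈ A ∧ y ∉ A) ∧
    (∀ F : Set (Set L2), (∀ A ∈ F, P2 A) →
      (∀ G ⊆ F, G.Finite → (⋂₀ G).Nonempty) → (⋂₀ F).Nonempty) ∧
    (∀ a b : L2, ¬ a ≤ b →
      ∃ A : Set L2, P2 A ∧ b ∈ A ∧ a ∉ {x : L2 | ∃ c ∈ A, x ≤ c}) := by
  refine ⟨?_, ?_, ?_, ?_⟩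
  · -- closure under down-sets
    intro A hA
    obtain ⟨N, hN⟩ := hA.exists_depth
    exact P2.of_depth (depth_down hN)
  · -- differentiated
    intro x y hxy
    have : ∃ n, x.toFun n ≠ y.toFun n := by
      by_contra h
      push_neg at h
      exact hxy (Lgen.ext' h)
    obtain ⟨n, hn⟩ := this
    refine ⟨{c : L2 | c.toFun n = x.toFun n}, P2.eval_set n (x.toFun n), rfl, fun h => ?_⟩
    have h' : y.toFun n = x.toFun n := h
    exact hn h'.symm
  · -- compact
    exact P2.compactness
  · -- tight
    intro a b hab
    rw [Lgen.le_def] at hab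
    push_neg at hab
    obtain ⟨n, s, has, hbs⟩ := hab
    refine ⟨{c : L2 | c.toFun n = some s}ᶜ, (P2.eval_set n (some s)).compl, hbs, ?_⟩
    rintro ⟨c, hc, hac⟩
    exact hc (hac n s has)
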